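/- arXiv:1405.4822 — 4 statements merged into one kernel-verified Lean document; each statement's English description precedes it below -/
import Mathlib

section
/- Let (α_i)_{i≥0} be a summable sequence of non-negative reals and define f : ℤ₊ ∪ {∞} → ℝ by f(n) = (∑_{i=0}^n α_i) − α_{n+1} for n ∈ ℤ₊ and f(∞) = ∑_{i=0}^∞ α_i. Then sup_n |f(n)| = f(∞); that is, ‖f‖_∞ = f(∞). -/
/-- For a summable sequence of non-negative reals `α` and
`f(n) = (∑_{i=0}^n α_i) − α_{n+1}`, the supremum of `|f(n)|` over `n ∈ ℤ₊`
equals `f(∞) = ∑_i α_i`. -/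
theorem stmt14 (α : ℕ → ℝ) (hα : ∀ i, 0 ≤ α i) (hsum : Summable α) :
    (⨆ n : ℕ, |(∑ i ∈ Finset.range (n + 1), α i) - α (n + 1)|) = ∑' i, α i := by
  have hub : ∀ n : ℕ, |(∑ i ∈ Finset.range (n + 1), α i) - α (n + 1)| ≤ ∑' i, α i := by
    intro n
    rw [abs_le]
    constructor
    · have h1 : α (n + 1) ≤ ∑' i, α i := Summable.le_tsum hsum _ (fun j _ => hα j)
      have h2 : 0 ≤ ∑ i ∈ Finset.range (n + 1), α i :=
        Finset.sum_nonneg fun i _ => hα i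
      linarith
    · have h1 : ∑ i ∈ Finset.range (n + 1), α i ≤ ∑' i, α i :=
        Summable.sum_le_tsum _ (fun j _ => hα j) hsum
      linarith [hα (n + 1)]
  have hbdd : BddAbove (Set.range fun n : ℕ =>
      |(∑ i ∈ Finset.range (n + 1), α i) - α (n + 1)|) :=
    ⟨∑' i, α i, by rintro x ⟨n, rfl⟩; exact hub n⟩
  refine le_antisymm (ciSup_le hub) ?_
  have ht1 : Filter.Tendsto (fun n : ℕ => ∑ i ∈ Finset.range (n + 1), α i)
      Filter.atTop (nhds (∑' i, α i)) :=
    (hsum.hasSum.tendsto_sum_nat).comp (Filter.tendsto_add_atTop_nat 1)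
  have ht2 : Filter.Tendsto (fun n : ℕ => α (n + 1)) Filter.atTop (nhds 0) :=
    (hsum.tendsto_atTop_zero).comp (Filter.tendsto_add_atTop_nat 1)
  have ht : Filter.Tendsto (fun n : ℕ => (∑ i ∈ Finset.range (n + 1), α i) - α (n + 1))
      Filter.atTop (nhds (∑' i, α i)) := by
    simpa using ht1.sub ht2
  exact le_of_tendsto' ht fun n =>
    le_trans (le_abs_self _) (le_ciSup hbdd n)
end

section
/- Let (α_i) be non-negative summable reals, f(n) = (∑_{i=0}^n α_i) − α_{n+1}, and r(n) = f(n)·2^{−(n+1)}. Then for every n ≥ 0: |r(n)| ≤ ∑_{k=n+1}^∞ r(k). -/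
/-- For non-negative summable `α`, `f(n) = (∑_{i=0}^n α_i) − α_{n+1}` and
`r(n) = f(n)·2^{−(n+1)}`, the tail inequalities
`|r(n)| ≤ ∑_{k>n} r(k)` hold for every `n`. -/
theorem stmt15 (α : ℕ → ℝ) (hα : ∀ i, 0 ≤ α i) (hsum : Summable α)
    (r : ℕ → ℝ)
    (hr : ∀ n : ℕ, r n =
      ((∑ i ∈ Finset.range (n + 1), α i) - α (n + 1)) * (2 : ℝ) ^ (-((n : ℝ) + 1))) :
    ∀ n : ℕ, |r n| ≤ ∑' k : ℕ, r (n + 1 + k) := by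
  -- rewrite the real power as a natural power of 1/2
  have hpow : ∀ n : ℕ, (2 : ℝ) ^ (-((n : ℝ) + 1)) = ((2 : ℝ)⁻¹) ^ (n + 1) := by
    intro n
    have : -((n : ℝ) + 1) = -(((n + 1 : ℕ) : ℝ)) := by push_cast; ring
    rw [this, Real.rpow_neg (by norm_num), Real.rpow_natCast, inv_pow]
  set g : ℕ → ℝ := fun k => (∑ i ∈ Finset.range (k + 1), α i) * ((2 : ℝ)⁻¹) ^ k with hg
  have hr2 : ∀ k, r k = g k - g (k + 1) := by
    intro k
    have hs : ∑ i ∈ Finset.range (k + 2), α i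
        = (∑ i ∈ Finset.range (k + 1), α i) + α (k + 1) := Finset.sum_range_succ _ _
    simp only [hg, hr k, hpow k]
    rw [show k + 1 + 1 = k + 2 from rfl, hs, pow_succ]
    ring
  have hT : ∀ k, 0 ≤ g k ∧ g k ≤ (∑' i, α i) * ((2 : ℝ)⁻¹) ^ k := by
    intro k
    constructor
    · exact mul_nonneg (Finset.sum_nonneg fun i _ => hα i) (by positivity)
    · exact mul_le_mul_of_nonneg_right (Summable.sum_le_tsum _ (fun i _ => hα i) hsum) (by positivity)
  have hgsum : Summable g := by
    apply Summable.of_nonneg_of_le (fun k => (hT k).1) (fun k => (hT k).2)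
    exact (summable_geometric_of_lt_one (by norm_num) (by norm_num)).mul_left _
  intro n
  have hs1 : Summable (fun k => g (n + 1 + k)) := by
    have := (summable_nat_add_iff (n + 1)).mpr hgsum
    exact this.congr (fun k => by rw [add_comm])
  have hs2 : Summable (fun k => g (n + 1 + k + 1)) := by
    have := (summable_nat_add_iff (n + 2)).mpr hgsum
    exact this.congr (fun k => by congr 1; omega)
  have htail : (∑' k : ℕ, r (n + 1 + k)) = g (n + 1) := by
    have h1 : (∑' k : ℕ, r (n + 1 + k))
        = (∑' k : ℕ, g (n + 1 + k)) - ∑' k : ℕ, g (n + 1 + k + 1) := by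
      rw [← Summable.tsum_sub hs1 hs2]
      exact tsum_congr fun k => hr2 _
    have h2 : (∑' k : ℕ, g (n + 1 + k)) = g (n + 1) + ∑' k : ℕ, g (n + 1 + (k + 1)) :=
      Summable.tsum_eq_zero_add hs1
    have h3 : (∑' k : ℕ, g (n + 1 + (k + 1))) = ∑' k : ℕ, g (n + 1 + k + 1) :=
      tsum_congr fun k => rfl
    rw [h1, h2, h3]; ring
  rw [htail]
  -- final estimate
  have hSn : 0 ≤ ∑ i ∈ Finset.range (n + 1), α i := Finset.sum_nonneg fun i _ => hα i
  have habs : |(∑ i ∈ Finset.range (n + 1), α i) - α (n + 1)|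
      ≤ (∑ i ∈ Finset.range (n + 1), α i) + α (n + 1) := by
    calc |(∑ i ∈ Finset.range (n + 1), α i) - α (n + 1)|
        ≤ |∑ i ∈ Finset.range (n + 1), α i| + |α (n + 1)| := abs_sub _ _
      _ = (∑ i ∈ Finset.range (n + 1), α i) + α (n + 1) := by
          rw [abs_of_nonneg hSn, abs_of_nonneg (hα _)]
  have hgval : g (n + 1) = ((∑ i ∈ Finset.range (n + 1), α i) + α (n + 1)) * ((2:ℝ)⁻¹) ^ (n + 1) := by
    simp only [hg]
    rw [show n + 1 + 1 = n + 2 from rfl, Finset.sum_range_succ]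
  rw [hr n, hpow n, abs_mul, abs_of_nonneg (by positivity : (0:ℝ) ≤ ((2:ℝ)⁻¹) ^ (n + 1)), hgval]
  exact mul_le_mul_of_nonneg_right habs (by positivity)
end

section
/- Let 1 ≤ p ≤ q ≤ ∞. Let μ be a measure on ℤ (plus a point ∞ of measure 0) with μ({n}) = 2^{−(n+1)} for n ≥ 0 and μ({n}) = 2^{−(n+1)} ≥ 1 for n < 0. Define for f the norm ‖f‖* = (‖f·1_{n<0}‖_{L^q(μ)}^q + ‖f·1_{n≥0}‖_{L^p(μ)}^q)^{1/q} (max of the two pieces when q = ∞). Then ‖f‖* < ∞ if and only if f ∈ L^p(μ) + L^q(μ). -/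
open MeasureTheory

/-- The Haar measure of Spector's countable non-compact hypergroup `H`,
viewed on `ℤ` (the identity `∞` has measure `0`): `μ({n}) = 2^{−(n+1)}`. -/
noncomputable def muH : Measure ℤ :=
  Measure.sum fun n : ℤ => ((2 : ENNReal) ^ (-((n : ℝ) + 1))) • Measure.dirac n

/-- The amalgam norm `‖f‖* = (‖f·1_{n<0}‖_{L^q}^q + ‖f·1_{n≥0}‖_{L^p}^q)^{1/q}`
(maximum of the two pieces when `q = ∞`). -/
noncomputable def starNorm (p q : ENNReal) (f : ℤ → ℝ) : ENNReal :=
  if q = ⊤ then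
    max (eLpNorm (Set.indicator {n : ℤ | n < 0} f) ⊤ muH)
      (eLpNorm (Set.indicator {n : ℤ | 0 ≤ n} f) p muH)
  else
    ((eLpNorm (Set.indicator {n : ℤ | n < 0} f) q muH) ^ q.toReal +
        (eLpNorm (Set.indicator {n : ℤ | 0 ≤ n} f) p muH) ^ q.toReal) ^ (1 / q.toReal)

lemma measurableSet_ZZ (s : Set ℤ) : MeasurableSet s := trivial

lemma lintegral_muH (g : ℤ → ENNReal) :
    ∫⁻ x, g x ∂muH = ∑' n : ℤ, (2 : ENNReal) ^ (-((n : ℝ) + 1)) * g n := by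
  rw [muH, lintegral_sum_measure]
  simp [lintegral_smul_measure, lintegral_dirac]

lemma muH_nonneg_lt_top : muH {n : ℤ | 0 ≤ n} < ⊤ := by
  have h1 : muH {n : ℤ | 0 ≤ n}
      = ∑' n : ℤ, (2 : ENNReal) ^ (-((n : ℝ) + 1)) * ({n : ℤ | 0 ≤ n}.indicator 1 n) := by
    rw [← lintegral_indicator_one (measurableSet_ZZ {n : ℤ | 0 ≤ n}), lintegral_muH]
  set F : ℤ → ENNReal := fun n => (2 : ENNReal) ^ (-((n : ℝ) + 1)) * ({n : ℤ | 0 ≤ n}.indicator 1 n)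
    with hF
  have h2 : ∑' n : ℤ, F n = ∑' k : ℕ, F (k : ℤ) := by
    refine (Function.Injective.tsum_eq (fun a b h => by exact_mod_cast h) ?_).symm
    intro x hx
    rcases lt_or_ge x 0 with hx' | hx'
    · exfalso; apply hx; simp [hF, Set.indicator_apply, Set.mem_setOf_eq, not_le.2 hx']
    · exact ⟨x.toNat, by simp [Int.toNat_of_nonneg hx']⟩
  have h3 : ∀ k : ℕ, F (k : ℤ) ≤ (2⁻¹ : ENNReal) ^ k := by
    intro k
    have e1 : (2 : ENNReal) ^ (-(k : ℝ)) = 2⁻¹ ^ k := by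
      rw [ENNReal.rpow_neg, ENNReal.rpow_natCast, ← ENNReal.inv_pow]
    calc F (k : ℤ) ≤ (2 : ENNReal) ^ (-(((k : ℤ) : ℝ) + 1)) * 1 :=
          mul_le_mul_right (Set.indicator_le_self _ _ _) _
      _ = (2 : ENNReal) ^ (-((k : ℝ) + 1)) := by rw [mul_one]; norm_num
      _ ≤ (2 : ENNReal) ^ (-(k : ℝ)) :=
          ENNReal.rpow_le_rpow_of_exponent_le (by norm_num) (by linarith)
      _ = 2⁻¹ ^ k := e1
  calc muH {n : ℤ | 0 ≤ n} = ∑' k : ℕ, F (k : ℤ) := by rw [h1, h2]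
    _ ≤ ∑' k : ℕ, (2⁻¹ : ENNReal) ^ k := ENNReal.tsum_le_tsum h3
    _ = (1 - 2⁻¹)⁻¹ := ENNReal.tsum_geometric _
    _ < ⊤ := by norm_num

/-- `L^q` restricted to the positive part (finite measure) lies in `L^p`. -/
lemma eLpNorm_indicator_nonneg_lt_top {p q : ENNReal} (hp : 1 ≤ p) (hpq : p ≤ q) {f : ℤ → ℝ}
    (hf : eLpNorm f q muH < ⊤) :
    eLpNorm (Set.indicator {n : ℤ | 0 ≤ n} f) p muH < ⊤ := by
  rw [eLpNorm_indicator_eq_eLpNorm_restrict (measurableSet_ZZ {n : ℤ | 0 ≤ n})]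
  have hmeas : AEStronglyMeasurable f (muH.restrict {n : ℤ | 0 ≤ n}) :=
    (measurable_from_top : Measurable f).aestronglyMeasurable
  have h1 := eLpNorm_le_eLpNorm_mul_rpow_measure_univ hpq hmeas
  have h2 : (muH.restrict {n : ℤ | 0 ≤ n}) Set.univ = muH {n : ℤ | 0 ≤ n} := by
    rw [Measure.restrict_apply MeasurableSet.univ, Set.univ_inter]
  have h3 : eLpNorm f q (muH.restrict {n : ℤ | 0 ≤ n}) ≤ eLpNorm f q muH :=
    eLpNorm_mono_measure f Measure.restrict_le_self
  have hp0 : p ≠ 0 := fun h => by simp [h] at hp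
  have h4 : (0 : ℝ) ≤ 1 / p.toReal - 1 / q.toReal := by
    rcases eq_or_ne q ⊤ with hq | hq
    · simp only [hq, ENNReal.toReal_top, div_zero, sub_zero]
      positivity
    · have hpt : p ≠ ⊤ := fun h => hq (top_le_iff.1 (h ▸ hpq))
      have hle : p.toReal ≤ q.toReal := ENNReal.toReal_mono hq hpq
      have hp' : 0 < p.toReal := ENNReal.toReal_pos hp0 hpt
      rw [sub_nonneg]
      exact div_le_div_of_nonneg_left (by norm_num) hp' hle
  refine lt_of_le_of_lt h1 ?_
  rw [h2]
  exact ENNReal.mul_lt_top (lt_of_le_of_lt h3 hf)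
    (ENNReal.rpow_lt_top_of_nonneg h4 muH_nonneg_lt_top.ne)

/-- `L^p` functions supported on the negative part (atoms of mass `≥ 1`) lie in `L^q`. -/
lemma eLpNorm_lt_top_of_support_neg {p q : ENNReal} (hp : 1 ≤ p) (hpq : p ≤ q) {f : ℤ → ℝ}
    (hf0 : ∀ n : ℤ, 0 ≤ n → f n = 0) (hfp : eLpNorm f p muH < ⊤) :
    eLpNorm f q muH < ⊤ := by
  rcases eq_or_ne p ⊤ with hpt | hpt
  · subst hpt
    rw [top_le_iff.1 hpq]; exact hfp
  have hp0 : p ≠ 0 := fun h => by simp [h] at hp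
  have hpt' : 0 < p.toReal := ENNReal.toReal_pos hp0 hpt
  have hnorm : eLpNorm f p muH
      = (∫⁻ x, (‖f x‖₊ : ENNReal) ^ p.toReal ∂muH) ^ (1 / p.toReal) :=
    eLpNorm_eq_lintegral_rpow_enorm_toReal hp0 hpt
  have hI : (∫⁻ x, (‖f x‖₊ : ENNReal) ^ p.toReal ∂muH) < ⊤ := by
    have h := hfp
    rw [hnorm] at h
    exact (ENNReal.rpow_lt_top_iff_of_pos (by positivity)).1 h
  have hbound : ∀ x : ℤ, (‖f x‖₊ : ENNReal) ≤ eLpNorm f p muH := by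
    intro x
    rcases le_or_gt 0 x with hx | hx
    · simp [hf0 x hx]
    · have hw : (1 : ENNReal) ≤ (2 : ENNReal) ^ (-((x : ℝ) + 1)) := by
        calc (1 : ENNReal) = (2 : ENNReal) ^ (0 : ℝ) := by rw [ENNReal.rpow_zero]
          _ ≤ (2 : ENNReal) ^ (-((x : ℝ) + 1)) := by
              refine ENNReal.rpow_le_rpow_of_exponent_le (by norm_num) ?_
              have hx1 : x ≤ -1 := by omega
              have hx1' : (x : ℝ) ≤ -1 := by exact_mod_cast hx1
              linarith
      have h1 : (‖f x‖₊ : ENNReal) ^ p.toReal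
          ≤ ∫⁻ x, (‖f x‖₊ : ENNReal) ^ p.toReal ∂muH := by
        calc (‖f x‖₊ : ENNReal) ^ p.toReal
            ≤ (2 : ENNReal) ^ (-((x : ℝ) + 1)) * (‖f x‖₊ : ENNReal) ^ p.toReal := by
              nth_rewrite 1 [← one_mul ((‖f x‖₊ : ENNReal) ^ p.toReal)]
              exact mul_le_mul_left hw _
          _ ≤ _ := by rw [lintegral_muH]; exact ENNReal.le_tsum x
      calc (‖f x‖₊ : ENNReal) = (((‖f x‖₊ : ENNReal)) ^ p.toReal) ^ p.toReal⁻¹ :=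
            (ENNReal.rpow_rpow_inv hpt'.ne' _).symm
        _ ≤ (∫⁻ x, (‖f x‖₊ : ENNReal) ^ p.toReal ∂muH) ^ p.toReal⁻¹ :=
            ENNReal.rpow_le_rpow h1 (by positivity)
        _ = eLpNorm f p muH := by rw [hnorm, one_div]
  rcases eq_or_ne q ⊤ with hqt | hqt
  · rw [hqt, eLpNorm_exponent_top, eLpNormEssSup]
    exact lt_of_le_of_lt
      (essSup_le_of_ae_le (eLpNorm f p muH) (Filter.Eventually.of_forall hbound)) hfp
  · have hq0 : q ≠ 0 := fun h => by
      rw [h, le_zero_iff] at hpq; exact hp0 hpq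
    have hqt' : 0 < q.toReal := ENNReal.toReal_pos hq0 hqt
    have hptqt : p.toReal ≤ q.toReal := ENNReal.toReal_mono hqt hpq
    rw [eLpNorm_eq_lintegral_rpow_enorm_toReal hq0 hqt]
    refine ENNReal.rpow_lt_top_of_nonneg (by positivity) ?_
    have key : ∫⁻ x, (‖f x‖₊ : ENNReal) ^ q.toReal ∂muH
        ≤ (∫⁻ x, (‖f x‖₊ : ENNReal) ^ p.toReal ∂muH)
          * (eLpNorm f p muH) ^ (q.toReal - p.toReal) := by
      rw [lintegral_muH, lintegral_muH, ← ENNReal.tsum_mul_right]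
      refine ENNReal.tsum_le_tsum fun n => ?_
      rw [mul_assoc]
      refine mul_le_mul_right ?_ _
      calc (‖f n‖₊ : ENNReal) ^ q.toReal
          = (‖f n‖₊ : ENNReal) ^ (p.toReal + (q.toReal - p.toReal)) := by ring_nf
        _ = (‖f n‖₊ : ENNReal) ^ p.toReal * (‖f n‖₊ : ENNReal) ^ (q.toReal - p.toReal) :=
            ENNReal.rpow_add_of_nonneg _ _ hpt'.le (by linarith)
        _ ≤ (‖f n‖₊ : ENNReal) ^ p.toReal * (eLpNorm f p muH) ^ (q.toReal - p.toReal) :=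
            mul_le_mul_right (ENNReal.rpow_le_rpow (hbound n) (by linarith)) _
    exact (lt_of_le_of_lt key
      (ENNReal.mul_lt_top hI
        (ENNReal.rpow_lt_top_of_nonneg (by linarith) hfp.ne))).ne

lemma starNorm_lt_top_iff {p q : ENNReal} (hq : 1 ≤ q) (f : ℤ → ℝ) :
    starNorm p q f < ⊤ ↔
      eLpNorm (Set.indicator {n : ℤ | n < 0} f) q muH < ⊤ ∧
        eLpNorm (Set.indicator {n : ℤ | 0 ≤ n} f) p muH < ⊤ := by
  unfold starNorm
  split_ifs with hq'
  · subst hq'; rw [max_lt_iff]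
  · have hq0 : q ≠ 0 := fun h => by simp [h] at hq
    have hqt : 0 < q.toReal := ENNReal.toReal_pos hq0 hq'
    rw [ENNReal.rpow_lt_top_iff_of_pos (by positivity : (0:ℝ) < 1 / q.toReal),
      ENNReal.add_lt_top, ENNReal.rpow_lt_top_iff_of_pos hqt,
      ENNReal.rpow_lt_top_iff_of_pos hqt]

/-- For `1 ≤ p ≤ q ≤ ∞`, a function has finite amalgam norm `‖f‖*` if and only
if it belongs to `L^p(μ) + L^q(μ)`. -/
theorem stmt16 (p q : ENNReal) (hp : 1 ≤ p) (hpq : p ≤ q) (f : ℤ → ℝ) :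
    starNorm p q f < ⊤ ↔
      ∃ g h : ℤ → ℝ, f = g + h ∧ eLpNorm g p muH < ⊤ ∧ eLpNorm h q muH < ⊤ := by
  have hq : 1 ≤ q := hp.trans hpq
  rw [starNorm_lt_top_iff hq]
  constructor
  · rintro ⟨h1, h2⟩
    refine ⟨Set.indicator {n : ℤ | 0 ≤ n} f, Set.indicator {n : ℤ | n < 0} f, ?_, h2, h1⟩
    funext x
    by_cases hx : x < 0
    · simp [Set.indicator_apply, Set.mem_setOf_eq, hx, not_le.2 hx]
    · simp [Set.indicator_apply, Set.mem_setOf_eq, hx, not_lt.1 hx]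
  · rintro ⟨g, h, rfl, hg, hh⟩
    have hmg : AEStronglyMeasurable (Set.indicator {n : ℤ | n < 0} g) muH :=
      (measurable_from_top : Measurable _).aestronglyMeasurable
    have hmh : AEStronglyMeasurable (Set.indicator {n : ℤ | n < 0} h) muH :=
      (measurable_from_top : Measurable _).aestronglyMeasurable
    have hmg' : AEStronglyMeasurable (Set.indicator {n : ℤ | 0 ≤ n} g) muH :=
      (measurable_from_top : Measurable _).aestronglyMeasurable
    have hmh' : AEStronglyMeasurable (Set.indicator {n : ℤ | 0 ≤ n} h) muH :=
      (measurable_from_top : Measurable _).aestronglyMeasurable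
    constructor
    · rw [Set.indicator_add']
      refine lt_of_le_of_lt (eLpNorm_add_le hmg hmh hq) ?_
      rw [ENNReal.add_lt_top]
      constructor
      · refine eLpNorm_lt_top_of_support_neg hp hpq
          (fun n hn => Set.indicator_of_notMem (by simpa using hn) g) ?_
        exact lt_of_le_of_lt (eLpNorm_indicator_le g) hg
      · exact lt_of_le_of_lt (eLpNorm_indicator_le h) hh
    · rw [Set.indicator_add']
      refine lt_of_le_of_lt (eLpNorm_add_le hmg' hmh' hp) ?_
      rw [ENNReal.add_lt_top]
      exact ⟨lt_of_le_of_lt (eLpNorm_indicator_le g) hg,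
        eLpNorm_indicator_nonneg_lt_top hp hpq hh⟩
end

section
/- Let (U_n) be a decreasing sequence of measurable symmetric neighbourhoods of the identity in a non-discrete locally compact measure space with measure ω, with 0 < ω(U_n) < 1/n. Set λ_n = 1/(n·ω(U_n)) and f = ∑_n λ_n · (1_{U_n} * 1_{U_n}) where ‖1_{U_n} * 1_{U_n}‖₁ = ω(U_n)². Then ‖f‖₁ ≤ ∑_n 1/n² < ∞, while f(e) ≥ ∑_n λ_n (1_{U_n}*1_{U_n})(e) = ∑_n λ_n ω(U_n) = ∑_n 1/n = ∞. -/
open MeasureTheory NNReal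

lemma aux_coe_inv_sq (n : ℕ) :
    (((n : ENNReal) + 1) ^ 2)⁻¹ = (((((n : ℝ≥0) + 1) ^ 2)⁻¹ : ℝ≥0) : ENNReal) := by
  rw [ENNReal.coe_inv (by positivity), ENNReal.coe_pow]
  norm_cast
  rw [ENNReal.coe_inv (by positivity), ENNReal.coe_natCast]

lemma aux_coe_inv (n : ℕ) :
    ((n : ENNReal) + 1)⁻¹ = ((((n : ℝ≥0) + 1)⁻¹ : ℝ≥0) : ENNReal) := by
  rw [ENNReal.coe_inv (by positivity)]
  norm_cast
  rw [ENNReal.coe_inv (by positivity), ENNReal.coe_natCast]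

lemma aux_sq_summable : Summable (fun n : ℕ => ((((n : ℝ≥0) + 1) ^ 2)⁻¹ : ℝ≥0)) := by
  rw [← NNReal.summable_coe]
  have h2 : Summable (fun n : ℕ => (1 : ℝ) / (n : ℝ) ^ 2) :=
    Real.summable_one_div_nat_pow.2 one_lt_two
  have := (_root_.summable_nat_add_iff 1).2 h2
  apply this.congr
  intro n
  push_cast
  rw [one_div]

lemma aux_harmonic_not_summable : ¬ Summable (fun n : ℕ => ((((n : ℝ≥0) + 1))⁻¹ : ℝ≥0)) := by
  rw [← NNReal.summable_coe]
  intro h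
  have h' : Summable (fun n : ℕ => (1 : ℝ) / ((n + 1 : ℕ) : ℝ)) := by
    apply h.congr
    intro n
    push_cast
    rw [one_div]
  exact Real.not_summable_one_div_natCast ((_root_.summable_nat_add_iff 1).1 h')

/-- The construction of an unbounded integrable function of positive type:
with `U_n` decreasing sets of measure `ω(U_n) < 1/n`, `λ_n = 1/(n ω(U_n))`,
and `g_n = 1_{U_n} * 1_{U_n}` (so `∫ g_n dω = ω(U_n)²` and `g_n(e) = ω(U_n)`),
the function `f = ∑_n λ_n g_n` satisfies `‖f‖₁ ≤ ∑_n 1/n² < ∞` while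
`f(e) = ∑_n λ_n ω(U_n) = ∑_n 1/n = ∞`. (Indices shifted: `n ≥ 1` is `n+1`.) -/
theorem stmt18 {X : Type*} [MeasurableSpace X] (ω : Measure X) (e : X)
    (U : ℕ → Set X) (hU : ∀ n, MeasurableSet (U n)) (hdec : ∀ n, U (n + 1) ⊆ U n)
    (hpos : ∀ n : ℕ, 0 < ω (U n))
    (hsmall : ∀ n : ℕ, ω (U n) < 1 / ((n : ENNReal) + 1))
    (g : ℕ → X → ENNReal) (hg : ∀ n, Measurable (g n))
    (hgint : ∀ n, ∫⁻ x, g n x ∂ω = ω (U n) ^ 2)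
    (hge : ∀ n, g n e = ω (U n)) :
    (∫⁻ x, ∑' n : ℕ, (((n : ENNReal) + 1) * ω (U n))⁻¹ * g n x ∂ω) ≤
        (∑' n : ℕ, (((n : ENNReal) + 1) ^ 2)⁻¹) ∧
      (∑' n : ℕ, (((n : ENNReal) + 1) ^ 2)⁻¹) < ⊤ ∧
      (∑' n : ℕ, (((n : ENNReal) + 1) * ω (U n))⁻¹ * g n e) = ⊤ := by
  have hne : ∀ n : ℕ, ω (U n) ≠ 0 := fun n => (hpos n).ne'
  have hlt1 : ∀ n : ℕ, ω (U n) ≤ ((n : ENNReal) + 1)⁻¹ := fun n => by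
    simpa [one_div] using (hsmall n).le
  have hfin : ∀ n : ℕ, ω (U n) ≠ ⊤ := fun n =>
    ((hsmall n).trans_le (by simp)).ne
  refine ⟨?_, ?_, ?_⟩
  · rw [lintegral_tsum fun n => ((hg n).const_mul _).aemeasurable]
    apply ENNReal.tsum_le_tsum
    intro n
    rw [lintegral_const_mul _ (hg n), hgint n, sq, ENNReal.mul_inv (Or.inr (hfin n)) (Or.inr (hne n)),
        mul_assoc, ← mul_assoc (ω (U n))⁻¹, ENNReal.inv_mul_cancel (hne n) (hfin n), one_mul, sq,
        ENNReal.mul_inv (by simp) (by simp)]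
    exact mul_le_mul_right (hlt1 n) _
  · rw [tsum_congr aux_coe_inv_sq, lt_top_iff_ne_top,
      ENNReal.tsum_coe_ne_top_iff_summable]
    exact aux_sq_summable
  · have heq : ∀ n : ℕ, (((n : ENNReal) + 1) * ω (U n))⁻¹ * g n e = ((n : ENNReal) + 1)⁻¹ := by
      intro n
      rw [hge n, ENNReal.mul_inv (by simp) (Or.inr (hne n)), mul_assoc,
        ENNReal.inv_mul_cancel (hne n) (hfin n), mul_one]
    rw [tsum_congr heq, tsum_congr aux_coe_inv]
    by_contra h
    exact aux_harmonic_not_summable (ENNReal.tsum_coe_ne_top_iff_summable.1 h)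
end
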